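/- Let n > 3 be an integer and b̃ ∈ ℝ with (n−3)/(n−1) < b̃ < (n−2)/(n−1), and set γ = (2−b̃)/(1−b̃). Then T̃ₙ(2, b̃) is invertible and ‖T̃ₙ(2, b̃)⁻¹‖∞ ≤ max{ n(1−γ)/2 + (γ−1)²(γ+1)/(2γ−n−1) , n(γ−1)/2 + (γ/(2γ−n−1))·(n+1)²/16 + 1/2 }. -/

import Mathlib

open Matrix BigOperators Finset

/-- The symmetric tridiagonal near-Toeplitz matrix with corner diagonal entries `bt`,
interior diagonal entries `b`, and off-diagonal entries `-1` (0-based indices). -/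
noncomputable def Ttilde (n : ℕ) (b bt : ℝ) : Matrix (Fin n) (Fin n) ℝ :=
  Matrix.of fun i j =>
    if (i : ℕ) = (j : ℕ) then (if (i : ℕ) = 0 ∨ (i : ℕ) = n - 1 then bt else b)
    else if (i : ℕ) + 1 = (j : ℕ) ∨ (j : ℕ) + 1 = (i : ℕ) then (-1 : ℝ) else 0

/-- The maximum absolute row sum (operator norm induced by the sup norm). -/
noncomputable def normInf {n : ℕ} (A : Matrix (Fin n) (Fin n) ℝ) : ℝ :=
  ⨆ i : Fin n, ∑ j : Fin n, |A i j|


lemma aux_R_zero (g : ℝ) (t : ℕ) (h : (t:ℝ) ≤ g) :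
    ∑ m ∈ Finset.range t, max 0 ((m:ℝ)+1-g) = 0 := by
  apply Finset.sum_eq_zero
  intro m hm
  have : (m:ℝ) + 1 ≤ (t:ℝ) := by
    have := Finset.mem_range.mp hm
    exact_mod_cast Nat.succ_le_of_lt this
  simp [max_eq_left]
  linarith

lemma aux_R_bound (g : ℝ) (t : ℕ) :
    ∑ m ∈ Finset.range t, max 0 ((m:ℝ)+1-g) ≤ (max 0 ((t:ℝ)-g)+1/2)^2/2 := by
  induction t with
  | zero => simp; positivity
  | succ t ih =>
    rw [Finset.sum_range_succ]
    rcases le_or_gt ((t:ℝ)+1) g with h | h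
    · -- last term zero, and whole sum zero
      have h0 := aux_R_zero g (t+1) (by push_cast; linarith)
      rw [Finset.sum_range_succ] at h0
      rw [h0]
      positivity
    · have hmax1 : max 0 ((t:ℝ)+1-g) = (t:ℝ)+1-g := max_eq_right (by linarith)
      have hcast : ((t+1:ℕ):ℝ) = (t:ℝ)+1 := by push_cast; ring
      rw [hcast, hmax1]
      rcases le_or_gt (t:ℝ) g with h2 | h2
      · have h0 := aux_R_zero g t h2
        rw [h0]
        nlinarith [sq_nonneg ((t:ℝ)+1-g-1/2)]
      · have hm2 : max 0 ((t:ℝ)-g) = (t:ℝ)-g := max_eq_right (by linarith)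
        rw [hm2] at ih
        nlinarith

lemma aux_F_bound (g : ℝ) (t : ℕ) :
    ∑ m ∈ Finset.range t, |(m:ℝ)+1-g| ≤
      (t:ℝ)*g - (t:ℝ)*((t:ℝ)+1)/2 + (max 0 ((t:ℝ)-g)+1/2)^2 := by
  have habs : ∀ m : ℕ, |(m:ℝ)+1-g| = (g - ((m:ℝ)+1)) + 2 * max 0 ((m:ℝ)+1-g) := by
    intro m
    rcases le_or_gt ((m:ℝ)+1) g with h | h
    · rw [abs_of_nonpos (by linarith), max_eq_left (by linarith)]; ring
    · rw [abs_of_pos (by linarith), max_eq_right (by linarith)]; ring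
  calc ∑ m ∈ Finset.range t, |(m:ℝ)+1-g|
      = ∑ m ∈ Finset.range t, ((g - ((m:ℝ)+1)) + 2 * max 0 ((m:ℝ)+1-g)) := by
        exact Finset.sum_congr rfl (fun m _ => habs m)
    _ = (t:ℝ)*g - (t:ℝ)*((t:ℝ)+1)/2 + 2 * ∑ m ∈ Finset.range t, max 0 ((m:ℝ)+1-g) := by
        rw [Finset.sum_add_distrib, ← Finset.mul_sum]
        congr 1
        have h1 : ∑ m ∈ Finset.range t, ((m:ℝ)+1) = (t:ℝ)*((t:ℝ)+1)/2 := by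
          induction t with
          | zero => simp
          | succ t ih => rw [Finset.sum_range_succ, ih]; push_cast; ring
        rw [Finset.sum_sub_distrib, h1, Finset.sum_const, Finset.card_range]
        push_cast; ring
    _ ≤ _ := by
        have := aux_R_bound g t
        linarith


lemma key_ineq (N g x : ℝ) (hN : 4 ≤ N) (hg1 : N+1 < 2*g) (hg2 : g < N)
    (hx1 : 1 ≤ x) (hx2 : x ≤ N) :
    |N+1-x-g| * (x*g - x*(x+1)/2 + (max 0 (x-g)+1/2)^2)
      + |x-g| * ((N-x)*g - (N-x)*(N-x+1)/2 + (max 0 (N-x-g)+1/2)^2)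
    ≤ (2*g-N-1) * (N*(1-g)/2) + (g-1)^2*(g+1) := by
  rcases le_or_gt g x with hgx | hgx
  · -- Case x ≥ g
    have h1 : max 0 (x-g) = x-g := max_eq_right (by linarith)
    have h2 : max 0 (N-x-g) = 0 := max_eq_left (by linarith)
    have h3 : |x-g| = x-g := abs_of_nonneg (by linarith)
    have h4 : |N+1-x-g| = x+g-N-1 := by rw [abs_of_nonpos (by linarith)]; ring
    rw [h1,h2,h3,h4]
    nlinarith [sq_nonneg (x-g), sq_nonneg (N-x), sq_nonneg (x+g-N-1), sq_nonneg (g-1), mul_nonneg (sub_nonneg.mpr hgx) (sub_nonneg.mpr hx2)]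
  rcases le_or_gt x (N-g) with hxg | hxg
  · -- Case x ≤ N-g
    have h1 : max 0 (x-g) = 0 := max_eq_left (by linarith)
    have h2 : max 0 (N-x-g) = N-x-g := max_eq_right (by linarith)
    have h3 : |x-g| = g-x := by rw [abs_of_nonpos (by linarith)]; ring
    have h4 : |N+1-x-g| = N+1-x-g := abs_of_nonneg (by linarith)
    rw [h1,h2,h3,h4]
    nlinarith [sq_nonneg (N-x-g), sq_nonneg (g-x), sq_nonneg (x-1), mul_nonneg (sub_nonneg.mpr hx1) (sub_nonneg.mpr hxg)]
  · -- Case N-g < x < g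
    have h1 : max 0 (x-g) = 0 := max_eq_left (by linarith)
    have h2 : max 0 (N-x-g) = 0 := max_eq_left (by linarith)
    have h3 : |x-g| = g-x := by rw [abs_of_nonpos (by linarith)]; ring
    rw [h1,h2,h3]
    rcases le_or_gt (N+1-x-g) 0 with hv | hv
    · have h4 : |N+1-x-g| = x+g-N-1 := by rw [abs_of_nonpos hv]; ring
      rw [h4]
      have ha : (0:ℝ) ≤ x+g-N-1 := by linarith
      have hb : (0:ℝ) ≤ g-x := by linarith
      have hs : (0:ℝ) ≤ x-1 := by linarith
      have he : (0:ℝ) ≤ N-x := by linarith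
      have hf : (0:ℝ) ≤ N-g := by linarith
      have hm : (0:ℝ) ≤ N-4 := by linarith
      nlinarith [mul_nonneg ha hb, mul_nonneg ha hs, mul_nonneg ha hf, mul_nonneg ha hm,
        mul_nonneg hb hs, mul_nonneg hb hf, mul_nonneg hb hm, mul_nonneg hs hf,
        mul_nonneg hs hm, mul_nonneg he hb, mul_nonneg he ha, mul_nonneg hf hm,
        mul_nonneg (mul_nonneg ha hb) hs, mul_nonneg (mul_nonneg ha hb) hf,
        mul_nonneg (mul_nonneg hb hs) hf, mul_nonneg (mul_nonneg ha hs) hf,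
        mul_nonneg (mul_nonneg hs hf) hm, mul_nonneg (mul_nonneg hb hs) hm]
    · have h4 : |N+1-x-g| = N+1-x-g := abs_of_nonneg (by linarith)
      rw [h4]
      nlinarith [sq_nonneg (g-x), sq_nonneg (x-1), sq_nonneg (N-x-g), mul_nonneg (sub_nonneg.mpr hx1) (sub_nonneg.mpr hx2)]

noncomputable def Mmat (n : ℕ) (g c : ℝ) : Matrix (Fin n) (Fin n) ℝ :=
  Matrix.of fun i j =>
    (((min (i:ℕ) (j:ℕ) : ℕ) : ℝ) + 1 - g) * ((n:ℝ) - ((max (i:ℕ) (j:ℕ) : ℕ) : ℝ) - g) / c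

lemma Mval {n : ℕ} {g c : ℝ} {a b : Fin n} (h : (a:ℕ) ≤ (b:ℕ)) :
    Mmat n g c a b = (((a:ℕ):ℝ) + 1 - g) * ((n:ℝ) - ((b:ℕ):ℝ) - g) / c := by
  simp only [Mmat, Matrix.of_apply, Nat.min_eq_left h, Nat.max_eq_right h]

lemma Mval' {n : ℕ} {g c : ℝ} {a b : Fin n} (h : (b:ℕ) ≤ (a:ℕ)) :
    Mmat n g c a b = (((b:ℕ):ℝ) + 1 - g) * ((n:ℝ) - ((a:ℕ):ℝ) - g) / c := by
  simp only [Mmat, Matrix.of_apply, Nat.min_eq_right h, Nat.max_eq_left h]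

lemma TM (n : ℕ) (hn : 3 < n) (bt g : ℝ) (hg1 : g - 1 ≠ 0) (hbt : bt = (g-2)/(g-1))
    (hc : (n:ℝ)+1-2*g ≠ 0) :
    Ttilde n 2 bt * Mmat n g ((n:ℝ)+1-2*g) = 1 := by
  set c : ℝ := (n:ℝ)+1-2*g with hcdef
  set M := Mmat n g c with hM
  have MV : ∀ (a b : Fin n), (a:ℕ) ≤ (b:ℕ) → M a b = (((a:ℕ):ℝ) + 1 - g) * ((n:ℝ) - ((b:ℕ):ℝ) - g) / c := fun a b h => Mval h
  have MV' : ∀ (a b : Fin n), (b:ℕ) ≤ (a:ℕ) → M a b = (((b:ℕ):ℝ) + 1 - g) * ((n:ℝ) - ((a:ℕ):ℝ) - g) / c := fun a b h => Mval' h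
  ext i k
  rw [Matrix.mul_apply, Matrix.one_apply]
  have hsplit : ∀ j : Fin n, Ttilde n 2 bt i j * M j k =
      (if (i:ℕ) = (j:ℕ) then (if (i:ℕ) = 0 ∨ (i:ℕ) = n-1 then bt else 2) * M j k else 0)
    + ((if (i:ℕ)+1 = (j:ℕ) then -M j k else 0)
    + (if (j:ℕ)+1 = (i:ℕ) then -M j k else 0)) := by
    intro j
    simp only [Ttilde, Matrix.of_apply]
    split_ifs <;> try omega
    all_goals ring
  rw [Finset.sum_congr rfl (fun j _ => hsplit j), Finset.sum_add_distrib,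
    Finset.sum_add_distrib]
  have hS1 : (∑ j : Fin n, if (i:ℕ) = (j:ℕ) then (if (i:ℕ) = 0 ∨ (i:ℕ) = n-1 then bt else 2) * M j k else 0)
      = (if (i:ℕ) = 0 ∨ (i:ℕ) = n-1 then bt else 2) * M i k := by
    rw [Finset.sum_eq_single_of_mem i (Finset.mem_univ i)]
    · rw [if_pos rfl]
    · intro j _ hj
      rw [if_neg]
      simp only [ne_eq, Fin.ext_iff] at hj
      omega
  rw [hS1]
  have hNcast : ((n - 1 : ℕ) : ℝ) = (n:ℝ) - 1 := by
    rw [Nat.cast_sub (by omega)]; norm_num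
  have hNcast2 : ((n - 2 : ℕ) : ℝ) = (n:ℝ) - 2 := by
    rw [Nat.cast_sub (by omega)]; norm_num
  by_cases hi0 : (i:ℕ) = 0
  · -- row 0
    have hS3 : (∑ j : Fin n, if (j:ℕ)+1 = (i:ℕ) then -M j k else 0) = 0 :=
      Finset.sum_eq_zero (fun j _ => by rw [if_neg (by omega)])
    have hS2 : (∑ j : Fin n, if (i:ℕ)+1 = (j:ℕ) then -M j k else 0)
        = -M ⟨1, by omega⟩ k := by
      rw [Finset.sum_eq_single_of_mem ⟨1, by omega⟩ (Finset.mem_univ _)]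
      · rw [if_pos (by simp [hi0])]
      · intro j _ hj
        rw [if_neg]
        simp only [ne_eq, Fin.ext_iff] at hj
        omega
    rw [hS2, hS3, if_pos (Or.inl hi0)]
    by_cases hk0 : (k:ℕ) = 0
    · rw [if_pos (Fin.ext (by omega)), MV i k (by omega), MV' ⟨1, by omega⟩ k (by simp only [Fin.val_mk]; omega)]
      simp only [hi0, hk0, Nat.cast_zero, Fin.val_mk, Nat.cast_one]
      rw [hbt]
      field_simp
      ring
    · rw [if_neg (by simp only [ne_eq, Fin.ext_iff]; omega), MV i k (by omega),
        MV ⟨1, by omega⟩ k (by simp only [Fin.val_mk]; omega)]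
      simp only [hi0, Nat.cast_zero, Fin.val_mk, Nat.cast_one]
      rw [hbt]
      field_simp
      ring
  by_cases hin : (i:ℕ) = n - 1
  · -- row n-1
    have hS2 : (∑ j : Fin n, if (i:ℕ)+1 = (j:ℕ) then -M j k else 0) = 0 :=
      Finset.sum_eq_zero (fun j _ => by rw [if_neg (by omega)])
    have hS3 : (∑ j : Fin n, if (j:ℕ)+1 = (i:ℕ) then -M j k else 0)
        = -M ⟨n-2, by omega⟩ k := by
      rw [Finset.sum_eq_single_of_mem ⟨n-2, by omega⟩ (Finset.mem_univ _)]
      · rw [if_pos (by simp only [Fin.val_mk]; omega)]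
      · intro j _ hj
        rw [if_neg]
        simp only [ne_eq, Fin.ext_iff, Fin.val_mk] at hj
        omega
    rw [hS2, hS3, if_pos (Or.inr hin)]
    by_cases hkn : (k:ℕ) = n - 1
    · rw [if_pos (Fin.ext (by omega)), MV i k (by omega),
        MV ⟨n-2, by omega⟩ k (by simp only [Fin.val_mk]; omega)]
      simp only [hin, hkn, Fin.val_mk, hNcast, hNcast2]
      rw [hbt]
      field_simp
      ring
    · rw [if_neg (by simp only [ne_eq, Fin.ext_iff]; omega), MV' i k (by omega),
        MV' ⟨n-2, by omega⟩ k (by simp only [Fin.val_mk]; omega)]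
      simp only [hin, Fin.val_mk, hNcast, hNcast2]
      rw [hbt]
      field_simp
      ring
  · -- interior row
    have h1i : 1 ≤ (i:ℕ) := by omega
    have hiub : (i:ℕ) + 1 < n := by have := i.isLt; omega
    have hS2 : (∑ j : Fin n, if (i:ℕ)+1 = (j:ℕ) then -M j k else 0)
        = -M ⟨(i:ℕ)+1, hiub⟩ k := by
      rw [Finset.sum_eq_single_of_mem ⟨(i:ℕ)+1, hiub⟩ (Finset.mem_univ _)]
      · rw [if_pos (by simp only [Fin.val_mk])]
      · intro j _ hj
        rw [if_neg]
        simp only [ne_eq, Fin.ext_iff, Fin.val_mk] at hj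
        omega
    have hS3 : (∑ j : Fin n, if (j:ℕ)+1 = (i:ℕ) then -M j k else 0)
        = -M ⟨(i:ℕ)-1, by omega⟩ k := by
      rw [Finset.sum_eq_single_of_mem ⟨(i:ℕ)-1, by omega⟩ (Finset.mem_univ _)]
      · rw [if_pos (by simp only [Fin.val_mk]; omega)]
      · intro j _ hj
        rw [if_neg]
        simp only [ne_eq, Fin.ext_iff, Fin.val_mk] at hj
        omega
    rw [hS2, hS3, if_neg (by omega)]
    have hicast : (((i:ℕ) - 1 : ℕ) : ℝ) = ((i:ℕ):ℝ) - 1 := by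
      rw [Nat.cast_sub h1i]; norm_num
    rcases lt_trichotomy (k:ℕ) (i:ℕ) with hki | hki | hki
    · rw [if_neg (by simp only [ne_eq, Fin.ext_iff]; omega), MV' i k (by omega),
        MV' ⟨(i:ℕ)+1, hiub⟩ k (by simp only [Fin.val_mk]; omega),
        MV' ⟨(i:ℕ)-1, by omega⟩ k (by simp only [Fin.val_mk]; omega)]
      simp only [Fin.val_mk, Nat.cast_add, Nat.cast_one, hicast]
      field_simp
      ring
    · rw [if_pos (Fin.ext (by omega)), MV i k (by omega),
        MV ⟨(i:ℕ)-1, by omega⟩ k (by simp only [Fin.val_mk]; omega),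
        MV' ⟨(i:ℕ)+1, hiub⟩ k (by simp only [Fin.val_mk]; omega)]
      simp only [Fin.val_mk, Nat.cast_add, Nat.cast_one, hicast, hki]
      field_simp
      ring
    · rw [if_neg (by simp only [ne_eq, Fin.ext_iff]; omega), MV i k (by omega),
        MV ⟨(i:ℕ)+1, hiub⟩ k (by simp only [Fin.val_mk]; omega),
        MV ⟨(i:ℕ)-1, by omega⟩ k (by simp only [Fin.val_mk]; omega)]
      simp only [Fin.val_mk, Nat.cast_add, Nat.cast_one, hicast]
      field_simp
      ring

lemma rowsum_le (n : ℕ) (hn : 3 < n) (g : ℝ) (hg1 : (n:ℝ)+1 < 2*g) (hg2 : g < (n:ℝ))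
    (i : Fin n) :
    ∑ j : Fin n, |Mmat n g ((n:ℝ)+1-2*g) i j| ≤
      (n:ℝ)*(1-g)/2 + (g-1)^2*(g+1)/(2*g-(n:ℝ)-1) := by
  have hN : (4:ℝ) ≤ (n:ℝ) := by exact_mod_cast hn
  set N := (n:ℝ) with hNdef
  have hD : 0 < 2*g - N - 1 := by linarith
  set D : ℝ := 2*g - N - 1 with hDdef
  have hcabs : |N + 1 - 2*g| = D := by rw [abs_of_neg (by linarith)]; ring
  -- rewrite each term
  have hterm : ∀ j : Fin n, |Mmat n g (N+1-2*g) i j|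
      = |(((min (i:ℕ) (j:ℕ) : ℕ) : ℝ) + 1 - g)| * |(N - ((max (i:ℕ) (j:ℕ) : ℕ) : ℝ) - g)| / D := by
    intro j
    rw [Mmat, Matrix.of_apply, abs_div, abs_mul, hcabs]
  rw [Finset.sum_congr rfl (fun j _ => hterm j)]
  -- convert to sum over range n
  have hconv : (∑ j : Fin n, |(((min (i:ℕ) (j:ℕ) : ℕ) : ℝ) + 1 - g)| * |(N - ((max (i:ℕ) (j:ℕ) : ℕ) : ℝ) - g)| / D)
      = ∑ m ∈ Finset.range n, |(((min (i:ℕ) m : ℕ) : ℝ) + 1 - g)| * |(N - ((max (i:ℕ) m : ℕ) : ℝ) - g)| / D := by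
    exact Fin.sum_univ_eq_sum_range (fun m => |(((min (i:ℕ) m : ℕ) : ℝ) + 1 - g)| * |(N - ((max (i:ℕ) m : ℕ) : ℝ) - g)| / D) n
  rw [hconv]
  have hi1 : (i:ℕ) + 1 ≤ n := i.isLt
  rw [← Finset.sum_range_add_sum_Ico _ hi1]
  -- first piece
  have hpart1 : (∑ m ∈ Finset.range ((i:ℕ)+1), |(((min (i:ℕ) m : ℕ) : ℝ) + 1 - g)| * |(N - ((max (i:ℕ) m : ℕ) : ℝ) - g)| / D)
      = (∑ m ∈ Finset.range ((i:ℕ)+1), |((m:ℝ) + 1 - g)|) * (|N - ((i:ℕ):ℝ) - g| / D) := by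
    rw [Finset.sum_mul]
    apply Finset.sum_congr rfl
    intro m hm
    have hmi : m ≤ (i:ℕ) := by have := Finset.mem_range.mp hm; omega
    rw [Nat.min_eq_right hmi, Nat.max_eq_left hmi]
    ring
  -- second piece
  have hK : n - ((i:ℕ)+1) = n - 1 - (i:ℕ) := by omega
  have hpart2 : (∑ m ∈ Finset.Ico ((i:ℕ)+1) n, |(((min (i:ℕ) m : ℕ) : ℝ) + 1 - g)| * |(N - ((max (i:ℕ) m : ℕ) : ℝ) - g)| / D)
      = |((i:ℕ):ℝ) + 1 - g| * (∑ m ∈ Finset.range (n - 1 - (i:ℕ)), |((m:ℝ) + 1 - g)|) / D := by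
    have e1 : ∀ m ∈ Finset.Ico ((i:ℕ)+1) n,
        |(((min (i:ℕ) m : ℕ) : ℝ) + 1 - g)| * |(N - ((max (i:ℕ) m : ℕ) : ℝ) - g)| / D
        = |((i:ℕ):ℝ) + 1 - g| * |(N - (m:ℝ) - g)| / D := by
      intro m hm
      have him : (i:ℕ) ≤ m := by have := (Finset.mem_Ico.mp hm).1; omega
      rw [Nat.min_eq_left him, Nat.max_eq_right him]
    rw [Finset.sum_congr rfl e1, Finset.sum_Ico_eq_sum_range, hK]
    have e2 : ∀ r ∈ Finset.range (n-1-(i:ℕ)),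
        |((i:ℕ):ℝ) + 1 - g| * |(N - (((i:ℕ)+1+r : ℕ):ℝ) - g)| / D
        = |((i:ℕ):ℝ) + 1 - g| * ((fun m : ℕ => |((m:ℝ) + 1 - g)|) ((n-1-(i:ℕ)) - 1 - r)) / D := by
      intro r hr
      have hrlt : r < n-1-(i:ℕ) := Finset.mem_range.mp hr
      have harg : ((n-1-(i:ℕ)-1-r : ℕ):ℝ) + 1 - g = N - (((i:ℕ)+1+r : ℕ):ℝ) - g := by
        rw [hNdef, Nat.cast_sub (by omega)]
        have : n-1-(i:ℕ)-1 = n - (i:ℕ) - 2 := by omega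
        rw [this, Nat.cast_sub (by omega), Nat.cast_sub (by omega)]
        push_cast; ring
      simp only
      rw [harg]
    rw [Finset.sum_congr rfl e2]
    have e3 : (∑ r ∈ Finset.range (n-1-(i:ℕ)),
        |((i:ℕ):ℝ) + 1 - g| * ((fun m : ℕ => |((m:ℝ) + 1 - g)|) ((n-1-(i:ℕ)) - 1 - r)) / D)
        = |((i:ℕ):ℝ) + 1 - g| * (∑ r ∈ Finset.range (n-1-(i:ℕ)), (fun m : ℕ => |((m:ℝ) + 1 - g)|) ((n-1-(i:ℕ)) - 1 - r)) / D := by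
      rw [Finset.mul_sum, Finset.sum_div]
    rw [e3, Finset.sum_range_reflect (fun m : ℕ => |((m:ℝ) + 1 - g)|) (n-1-(i:ℕ))]
  rw [hpart1, hpart2]
  -- now bound
  set x : ℝ := ((i:ℕ):ℝ) + 1 with hxdef
  have hx1 : 1 ≤ x := by
    rw [hxdef]
    have : (0:ℝ) ≤ ((i:ℕ):ℝ) := Nat.cast_nonneg _
    linarith
  have hx2 : x ≤ N := by
    have : (i:ℕ) + 1 ≤ n := i.isLt
    rw [hxdef, hNdef]
    exact_mod_cast this
  have hA := aux_F_bound g ((i:ℕ)+1)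
  have hB := aux_F_bound g (n-1-(i:ℕ))
  have hcastA : (((i:ℕ)+1 : ℕ):ℝ) = x := by push_cast [hxdef]; ring
  have hcastB : ((n-1-(i:ℕ) : ℕ):ℝ) = N - x := by
    rw [hNdef, hxdef]
    have : n-1-(i:ℕ) = n - ((i:ℕ)+1) := by omega
    rw [this, Nat.cast_sub (by exact i.isLt)]
    push_cast; ring
  rw [hcastA] at hA
  rw [hcastB] at hB
  have hAnn : (0:ℝ) ≤ ∑ m ∈ Finset.range ((i:ℕ)+1), |((m:ℝ) + 1 - g)| :=
    Finset.sum_nonneg (fun m _ => abs_nonneg _)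
  have hBnn : (0:ℝ) ≤ ∑ m ∈ Finset.range (n-1-(i:ℕ)), |((m:ℝ) + 1 - g)| :=
    Finset.sum_nonneg (fun m _ => abs_nonneg _)
  have hvabs : |N - ((i:ℕ):ℝ) - g| = |N + 1 - x - g| := by rw [hxdef]; ring_nf
  have huabs : |((i:ℕ):ℝ) + 1 - g| = |x - g| := by rw [hxdef]
  rw [hvabs, huabs]
  have key := key_ineq N g x hN hg1 hg2 hx1 hx2
  set A := ∑ m ∈ Finset.range ((i:ℕ)+1), |((m:ℝ) + 1 - g)| with hAdef
  set B := ∑ m ∈ Finset.range (n-1-(i:ℕ)), |((m:ℝ) + 1 - g)| with hBdef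
  have hGx := abs_nonneg (N + 1 - x - g)
  have hGy := abs_nonneg (x - g)
  have hnum : A * |N + 1 - x - g| + |x - g| * B ≤
      |N + 1 - x - g| * (x*g - x*(x+1)/2 + (max 0 (x-g)+1/2)^2)
      + |x - g| * ((N-x)*g - (N-x)*(N-x+1)/2 + (max 0 (N-x-g)+1/2)^2) := by
    have h1 := mul_le_mul_of_nonneg_right hA hGx
    have h2 := mul_le_mul_of_nonneg_left hB hGy
    nlinarith
  calc A * (|N + 1 - x - g| / D) + |x - g| * B / D
      = (A * |N + 1 - x - g| + |x - g| * B) / D := by ring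
    _ ≤ (|N + 1 - x - g| * (x*g - x*(x+1)/2 + (max 0 (x-g)+1/2)^2)
      + |x - g| * ((N-x)*g - (N-x)*(N-x+1)/2 + (max 0 (N-x-g)+1/2)^2)) / D := by gcongr
    _ ≤ ((2*g-N-1) * (N*(1-g)/2) + (g-1)^2*(g+1)) / D := by gcongr
    _ = N*(1-g)/2 + (g-1)^2*(g+1)/D := by
        have hDne : (2*g - N - 1 : ℝ) ≠ 0 := by
          have h := hD; rw [hDdef] at h; exact ne_of_gt h
        rw [hDdef, add_div, mul_div_cancel_left₀ _ hDne]


theorem stmt14 (n : ℕ) (hn : 3 < n) (bt : ℝ)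
    (hbt1 : ((n : ℝ) - 3) / ((n : ℝ) - 1) < bt) (hbt2 : bt < ((n : ℝ) - 2) / ((n : ℝ) - 1)) :
    IsUnit (Ttilde n 2 bt) ∧
    normInf ((Ttilde n 2 bt)⁻¹) ≤
      max ((n : ℝ) * (1 - (2 - bt) / (1 - bt)) / 2
            + ((2 - bt) / (1 - bt) - 1) ^ 2 * ((2 - bt) / (1 - bt) + 1)
                / (2 * ((2 - bt) / (1 - bt)) - (n : ℝ) - 1))
        ((n : ℝ) * ((2 - bt) / (1 - bt) - 1) / 2
            + ((2 - bt) / (1 - bt)) / (2 * ((2 - bt) / (1 - bt)) - (n : ℝ) - 1)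
                * (((n : ℝ) + 1) ^ 2 / 16)
            + 1 / 2) := by
  have hN4 : (4:ℝ) ≤ (n:ℝ) := by exact_mod_cast hn
  have hN1 : (0:ℝ) < (n:ℝ) - 1 := by linarith
  have h1bt : 0 < 1 - bt := by
    have h2 : ((n:ℝ) - 2) / ((n:ℝ) - 1) < 1 := by
      rw [div_lt_one hN1]; linarith
    linarith
  have hbt1' : (n:ℝ) - 3 < bt * ((n:ℝ) - 1) := by
    rw [div_lt_iff₀ hN1] at hbt1; exact hbt1
  have hbt2' : bt * ((n:ℝ) - 1) < (n:ℝ) - 2 := by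
    rw [lt_div_iff₀ hN1] at hbt2; exact hbt2
  set g : ℝ := (2 - bt) / (1 - bt) with hgdef
  have h1btne : (1 - bt) ≠ 0 := ne_of_gt h1bt
  have hrel : g * (1 - bt) = 2 - bt := by
    rw [hgdef, div_mul_cancel₀ _ h1btne]
  have hg1 : (n:ℝ) + 1 < 2 * g := by
    have h : ((n:ℝ) + 1) * (1 - bt) < 2 * (2 - bt) := by nlinarith
    nlinarith [hrel]
  have hgu : g < (n:ℝ) := by
    have h : 2 - bt < (n:ℝ) * (1 - bt) := by nlinarith
    nlinarith [hrel]
  have hgm1 : g - 1 ≠ 0 := ne_of_gt (by linarith : (0:ℝ) < g - 1)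
  have hbtdef : bt = (g - 2) / (g - 1) := by
    rw [eq_div_iff hgm1]
    linear_combination -hrel
  have hcne : ((n:ℝ) + 1 - 2 * g) ≠ 0 := ne_of_lt (by linarith)
  have hTM : Ttilde n 2 bt * Mmat n g ((n:ℝ) + 1 - 2 * g) = 1 :=
    TM n hn bt g hgm1 hbtdef hcne
  constructor
  · exact (Matrix.isUnit_iff_isUnit_det _).mpr (Matrix.isUnit_det_of_right_inverse hTM)
  · have hinv : (Ttilde n 2 bt)⁻¹ = Mmat n g ((n:ℝ) + 1 - 2 * g) :=
      Matrix.inv_eq_right_inv hTM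
    rw [hinv]
    have hne : Nonempty (Fin n) := ⟨⟨0, by omega⟩⟩
    rw [normInf]
    apply ciSup_le
    intro i
    calc ∑ j : Fin n, |Mmat n g ((n:ℝ) + 1 - 2 * g) i j|
        ≤ (n:ℝ)*(1-g)/2 + (g-1)^2*(g+1)/(2*g-(n:ℝ)-1) := rowsum_le n hn g hg1 hgu i
      _ ≤ _ := le_max_left _ _
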